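/- Let f, g, g' be EC loops in a digital image (X,κ) at a common basepoint, with g EC homotopic to g' holding the endpoints fixed. Then f * g is EC homotopic to f * g' holding the endpoints fixed. -/

import Mathlib

/-- 2-adjacency (c₁-adjacency) on the natural numbers / digital intervals. -/
def natAdj (a b : ℕ) : Prop := b = a + 1 ∨ a = b + 1

/-- Digital `(κ,μ)`-continuity of a function between digital images. -/
def DigCont {X Y : Type*} (κ : X → X → Prop) (μ : Y → Y → Prop) (f : X → Y) : Prop :=
  ∀ a b, κ a b → f a = f b ∨ μ (f a) (f b)

/-- `(2,κ)`-continuity for functions on `ℕ* = {0,1,2,…}` with 2-adjacency. -/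
def ECCont {X : Type*} (κ : X → X → Prop) (f : ℕ → X) : Prop :=
  ∀ a b, natAdj a b → f a = f b ∨ κ (f a) (f b)

/-- An eventually constant (EC) path in `(X,κ)`. -/
def IsECPath {X : Type*} (κ : X → X → Prop) (f : ℕ → X) : Prop :=
  ECCont κ f ∧ ∃ N, ∀ n, N ≤ n → f n = f N

/-- `N_f`, the least index after which `f` is constant. -/
noncomputable def ecN {X : Type*} (f : ℕ → X) : ℕ :=
  sInf {m | ∀ n, m ≤ n → f n = f m}

/-- An EC homotopy from `f` to `g` (each stage is an EC path). -/
def IsECHomotopy {X : Type*} (κ : X → X → Prop) (f g : ℕ → X) (k : ℕ)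
    (H : ℕ → ℕ → X) : Prop :=
  (∀ n, H n 0 = f n) ∧ (∀ n, H n k = g n) ∧
  (∀ n s t, s ≤ k → t ≤ k → natAdj s t → H n s = H n t ∨ κ (H n s) (H n t)) ∧
  (∀ t, t ≤ k → IsECPath κ (fun n => H n t))

/-- The EC homotopy `H` from `f` to `g` holds the endpoints fixed. -/
def ECHoldsEnds {X : Type*} (f g : ℕ → X) (k : ℕ) (H : ℕ → ℕ → X) : Prop :=
  f 0 = g 0 ∧ (∀ t, t ≤ k → H 0 t = f 0) ∧
  ∃ c, ∀ n, c ≤ n → f n = g n ∧ ∀ t, t ≤ k → H n t = f n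

/-- `f` and `g` are EC homotopic. -/
def ECHomotopic {X : Type*} (κ : X → X → Prop) (f g : ℕ → X) : Prop :=
  ∃ k H, IsECHomotopy κ f g k H

/-- `f` and `g` are EC homotopic holding the endpoints fixed. -/
def ECHomotopicFix {X : Type*} (κ : X → X → Prop) (f g : ℕ → X) : Prop :=
  ∃ k H, IsECHomotopy κ f g k H ∧ ECHoldsEnds f g k H

/-- The product `f * g` of EC loops. -/
noncomputable def ecStar {X : Type*} (f g : ℕ → X) : ℕ → X :=
  fun n => if n ≤ ecN f then f n else g (n - ecN f)

/-- An EC loop based at `x₀`: an EC path with `f(0) = f(∞) = x₀`. -/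
def IsECLoop {X : Type*} (κ : X → X → Prop) (x₀ : X) (f : ℕ → X) : Prop :=
  IsECPath κ f ∧ f 0 = x₀ ∧ ∃ N, ∀ n, N ≤ n → f n = x₀


lemma ecN_spec {X : Type*} (f : ℕ → X) (hf : ∃ N, ∀ n, N ≤ n → f n = f N) :
    ∀ n, ecN f ≤ n → f n = f (ecN f) := by
  have : (ecN f) ∈ {m | ∀ n, m ≤ n → f n = f m} := by
    apply Nat.sInf_mem
    obtain ⟨N, hN⟩ := hf
    exact ⟨N, hN⟩
  exact this

theorem ec_star_left_congr {X : Type*} (κ : X → X → Prop) (hκ : Symmetric κ)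
    (x₀ : X) (f g g' : ℕ → X)
    (hf : IsECLoop κ x₀ f) (hg : IsECLoop κ x₀ g) (hg' : IsECLoop κ x₀ g')
    (h : ECHomotopicFix κ g g') :
    ECHomotopicFix κ (ecStar f g) (ecStar f g') := by
  obtain ⟨k, H, ⟨H0, Hk, Hcont, Hstage⟩, ⟨hgg0, hH0, c, hc⟩⟩ := h
  obtain ⟨⟨fcont, fN⟩, hf0, Nf', hNf'⟩ := hf
  set Nf := ecN f with hNfdef
  have hfN : ∀ n, Nf ≤ n → f n = f Nf := ecN_spec f fN
  have hfNx : f Nf = x₀ := by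
    have h1 := hfN (max Nf Nf') (le_max_left _ _)
    have h2 := hNf' (max Nf Nf') (le_max_right _ _)
    rw [h1] at h2; exact h2
  have hH0x : ∀ t, t ≤ k → H 0 t = x₀ := by
    intro t ht; rw [hH0 t ht, hg.2.1]
  -- the homotopy
  refine ⟨k, fun n t => if n ≤ Nf then f n else H (n - Nf) t, ⟨?_, ?_, ?_, ?_⟩, ?_, ?_, ?_⟩
  · intro n; simp only [ecStar]; split <;> simp [H0, hNfdef]
  · intro n; simp only [ecStar]; split <;> simp [Hk, hNfdef]
  · intro n s t hs ht hst
    by_cases hn : n ≤ Nf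
    · simp [hn]
    · simp only [hn, if_false]
      exact Hcont (n - Nf) s t hs ht hst
  · intro t ht
    constructor
    · -- ECCont of stage
      have key : ∀ a, (if a ≤ Nf then f a else H (a - Nf) t) = (if a + 1 ≤ Nf then f (a+1) else H (a + 1 - Nf) t) ∨ κ (if a ≤ Nf then f a else H (a - Nf) t) (if a + 1 ≤ Nf then f (a+1) else H (a + 1 - Nf) t) := by
        intro a
        by_cases h1 : a + 1 ≤ Nf
        · have h2 : a ≤ Nf := le_of_lt h1
          simp only [h1, h2, if_true]
          exact fcont a (a+1) (Or.inl rfl)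
        · by_cases h2 : a ≤ Nf
          · -- a = Nf
            have ha : a = Nf := le_antisymm h2 (by omega)
            simp only [h1, h2, if_true, if_false]
            have : a + 1 - Nf = 1 := by omega
            rw [this, ha, hfNx]
            have := (Hstage t ht).1 0 1 (Or.inl rfl)
            simp only at this
            rw [hH0x t ht] at this
            exact this
          · simp only [h1, h2, if_false]
            have : natAdj (a - Nf) (a + 1 - Nf) := by left; omega
            exact (Hstage t ht).1 _ _ this
      intro a b hab
      rcases hab with hab | hab
      · subst hab; exact key a
      · subst hab
        rcases key b with h' | h'
        · exact Or.inl h'.symm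
        · exact Or.inr (hκ h')
    · -- eventually constant
      obtain ⟨Nt, hNt⟩ := (Hstage t ht).2
      refine ⟨Nf + Nt + 1, fun n hn => ?_⟩
      have h1 : ¬ n ≤ Nf := by omega
      have h2 : ¬ Nf + Nt + 1 ≤ Nf := by omega
      simp only [h1, h2, if_false]
      have e1 := hNt (n - Nf) (by omega)
      have e2 := hNt (Nf + Nt + 1 - Nf) (by omega)
      simp only at e1 e2
      rw [e1, e2]
  · simp [ecStar]
  · intro t ht
    simp only [ecStar, Nat.zero_le, if_true]
  · refine ⟨Nf + c + 1, fun n hn => ?_⟩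
    have h1 : ¬ n ≤ Nf := by omega
    have hcn := hc (n - Nf) (by omega)
    constructor
    · simp only [ecStar, ← hNfdef, h1, if_false]
      exact hcn.1
    · intro t ht
      simp only [ecStar, ← hNfdef, h1, if_false]
      exact hcn.2 t ht
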